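/- For every natural number n ≥ 1, the generalized quaternion algebra H_ℚ(−1, −b_{n+1}·b_{n−1}) is a division algebra; equivalently, every nonzero element of H_ℚ(−1, −b_{n+1}·b_{n−1}) is a unit. -/

import Mathlib

/-- The sequence `a` defined by `a 0 = 0`, `a 1 = 1`, `a (n+2) = l * a (n+1) + a n`. -/
def a (l : ℕ) : ℕ → ℤ
  | 0 => 0
  | 1 => 1
  | n + 2 => l * a l (n + 1) + a l n

/-- The sequence `b` defined by `b 0 = 2`, `b 1 = l`, `b (n+2) = l * b (n+1) + b n`. -/
def b (l : ℕ) : ℕ → ℤ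
  | 0 => 2
  | 1 => (l : ℤ)
  | n + 2 => l * b l (n + 1) + b l n

lemma b_pos (l : ℕ) (hl : 0 < l) : ∀ m, 0 < b l m := by
  have key : ∀ m, 0 < b l m ∧ 0 < b l (m + 1) := by
    intro m
    induction m with
    | zero =>
      constructor
      · norm_num [b]
      · simpa [b] using hl
    | succ k ih =>
      refine ⟨ih.2, ?_⟩
      show 0 < l * b l (k + 1) + b l k
      have : (1 : ℤ) ≤ l := by exact_mod_cast hl
      nlinarith [ih.1, ih.2]
  exact fun m => (key m).1

open Quaternion in
/-- The quaternion algebra `H_ℚ(-1, -b_{n+1}·b_{n-1})` is a division algebra. -/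
theorem quat_alg_division_neg_bb (l : ℕ) (hl : 0 < l) (n : ℕ) (hn : 1 ≤ n) :
    ∀ x : ℍ[ℚ, -1, ((-(b l (n + 1) * b l (n - 1)) : ℤ) : ℚ)], x ≠ 0 → IsUnit x := by
  set c : ℚ := ((-(b l (n + 1) * b l (n - 1)) : ℤ) : ℚ) with hc
  have hcneg : c < 0 := by
    rw [hc]
    have h1 := b_pos l hl (n + 1)
    have h2 := b_pos l hl (n - 1)
    have : (0 : ℤ) < b l (n + 1) * b l (n - 1) := mul_pos h1 h2
    push_cast
    exact neg_neg_iff_pos.mpr (by exact_mod_cast this)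
  intro x hx
  set N : ℚ := x.re ^ 2 + x.imI ^ 2 - c * x.imJ ^ 2 - c * x.imK ^ 2 with hN
  have hNpos : 0 < N := by
    have h0 : x.re ≠ 0 ∨ x.imI ≠ 0 ∨ x.imJ ≠ 0 ∨ x.imK ≠ 0 := by
      by_contra h
      push_neg at h
      exact hx (QuaternionAlgebra.ext h.1 h.2.1 h.2.2.1 h.2.2.2)
    have hre := sq_nonneg x.re
    have hi := sq_nonneg x.imI
    have hj := sq_nonneg x.imJ
    have hk := sq_nonneg x.imK
    rcases h0 with h | h | h | h <;>
      nlinarith [show (0:ℚ) < _ ^ 2 from pow_pos (abs_pos.mpr h) 2, sq_abs x.re,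
        sq_abs x.imI, sq_abs x.imJ, sq_abs x.imK]
  have hNne : N ≠ 0 := ne_of_gt hNpos
  refine ⟨⟨x, N⁻¹ • star x, ?_, ?_⟩, rfl⟩
  · ext
    all_goals try simp [QuaternionAlgebra.re_mul, QuaternionAlgebra.imI_mul,
        QuaternionAlgebra.imJ_mul, QuaternionAlgebra.imK_mul]
    all_goals try field_simp
    all_goals first | (right; ring) | (rw [hN]; ring)
  · ext
    all_goals try simp [QuaternionAlgebra.re_mul, QuaternionAlgebra.imI_mul,
        QuaternionAlgebra.imJ_mul, QuaternionAlgebra.imK_mul]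
    all_goals try field_simp
    all_goals first | (right; ring) | (rw [hN]; ring)
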